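/- Let n ≥ 1, let 0 < p < 1, and let (a_k)_{k=1}^n and (b_k)_{k=1}^n be non-negative non-increasing sequences of real numbers. Then (∑_{k=1}^n (-1)^{k+1} (a_k + b_k)^p)^{1/p} ≤ 2^{1/p − 1} · ((∑_{k=1}^n (-1)^{k+1} a_k^p)^{1/p} + (∑_{k=1}^n (-1)^{k+1} b_k^p)^{1/p}). -/

import Mathlib

open Finset

/-- Concave increments: for `0 ≤ p ≤ 1`, `0 ≤ s ≤ t`, `0 ≤ d`,
`(t+d)^p - t^p ≤ (s+d)^p - s^p`. -/
lemma concave_increment {p : ℝ} (hp0 : 0 ≤ p) (hp1 : p ≤ 1) {s t d : ℝ}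
    (hs : 0 ≤ s) (hst : s ≤ t) (hd : 0 ≤ d) :
    (t + d) ^ p - t ^ p ≤ (s + d) ^ p - s ^ p := by
  rcases eq_or_lt_of_le hd with rfl | hd
  · simp
  rcases eq_or_lt_of_le hst with rfl | hst
  · simp
  have ht : (0:ℝ) ≤ t := hs.trans hst.le
  have hD : (0:ℝ) < t + d - s := by linarith
  set lam : ℝ := d / (t + d - s) with hlam
  set mu : ℝ := (t - s) / (t + d - s) with hmu
  have hlam0 : 0 ≤ lam := by positivity
  have hmu0 : 0 ≤ mu := by
    apply div_nonneg (by linarith) hD.le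
  have hlm : lam + mu = 1 := by
    rw [hlam, hmu, ← add_div, div_eq_one_iff_eq hD.ne']
    ring
  have hf := Real.concaveOn_rpow hp0 hp1
  have htd : (t + d) ∈ Set.Ici (0:ℝ) := by simp; linarith
  have hs' : s ∈ Set.Ici (0:ℝ) := hs
  have h1 := hf.2 htd hs' hlam0 hmu0 hlm
  have h2 := hf.2 htd hs' hmu0 hlam0 (by linarith)
  have e1 : lam * (t + d) + mu * s = s + d := by
    rw [hlam, hmu, div_mul_eq_mul_div, div_mul_eq_mul_div, ← add_div, div_eq_iff hD.ne']; ring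
  have e2 : mu * (t + d) + lam * s = t := by
    rw [hlam, hmu, div_mul_eq_mul_div, div_mul_eq_mul_div, ← add_div, div_eq_iff hD.ne']; ring
  simp only [smul_eq_mul] at h1 h2
  rw [e1] at h1
  rw [e2] at h2
  have hX : lam * (t + d) ^ p + mu * (t + d) ^ p = (t + d) ^ p := by
    rw [← add_mul, hlm, one_mul]
  have hY : lam * s ^ p + mu * s ^ p = s ^ p := by
    rw [← add_mul, hlm, one_mul]
  linarith [h1, h2, hX, hY]

/-- Monotonicity of `a^p + b^p - (a+b)^p` in each variable. -/
lemma c_mono {p : ℝ} (hp0 : 0 ≤ p) (hp1 : p ≤ 1) {a a' b b' : ℝ}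
    (ha0 : 0 ≤ a') (hb0 : 0 ≤ b') (ha : a' ≤ a) (hb : b' ≤ b) :
    a' ^ p + b' ^ p - (a' + b') ^ p ≤ a ^ p + b ^ p - (a + b) ^ p := by
  have h1 := concave_increment hp0 hp1 (s := a') (t := a' + b) (d := a - a')
    ha0 (by linarith) (by linarith)
  rw [show a' + b + (a - a') = a + b by ring, show a' + (a - a') = a by ring] at h1
  have h2 := concave_increment hp0 hp1 (s := b') (t := a' + b') (d := b - b')
    hb0 (by linarith) (by linarith)
  rw [show a' + b' + (b - b') = a' + b by ring, show b' + (b - b') = b by ring] at h2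
  linarith

/-- Alternating sums of non-increasing non-negative sequences are at least the last
term when `n` is odd, and at least `0` otherwise. -/
lemma alt_sum_ge (n : ℕ) (c : ℕ → ℝ) (h0 : ∀ k, 1 ≤ k → k ≤ n → 0 ≤ c k)
    (hm : ∀ k, 1 ≤ k → k < n → c (k + 1) ≤ c k) :
    (if n % 2 = 1 then c n else 0) ≤ ∑ k ∈ Finset.Icc 1 n, (-1 : ℝ) ^ (k + 1) * c k := by
  induction n with
  | zero => simp
  | succ m ih =>
    have hsum : ∑ k ∈ Finset.Icc 1 (m + 1), (-1 : ℝ) ^ (k + 1) * c k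
        = (∑ k ∈ Finset.Icc 1 m, (-1 : ℝ) ^ (k + 1) * c k) + (-1 : ℝ) ^ (m + 2) * c (m + 1) := by
      rw [← Finset.sum_Icc_succ_top (Nat.one_le_iff_ne_zero.mpr (Nat.succ_ne_zero m))]
    have ih' := ih (fun k hk1 hk2 => h0 k hk1 (hk2.trans (Nat.le_succ m)))
      (fun k hk1 hk2 => hm k hk1 (hk2.trans (Nat.lt_succ_self m)))
    rw [hsum]
    rcases Nat.even_or_odd m with he | ho
    · -- m even, m+1 odd
      have hm2 : m % 2 = 0 := Nat.even_iff.mp he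
      have hm12 : (m + 1) % 2 = 1 := by omega
      have hsign : (-1 : ℝ) ^ (m + 2) = 1 := by
        rcases he with ⟨r, hr⟩
        subst hr
        rw [show r + r + 2 = 2 * (r + 1) by ring, pow_mul]
        norm_num
      simp only [hm2, hm12, if_true] at ih' ⊢
      norm_num at ih' ⊢
      rw [hsign]
      linarith
    · -- m odd, m+1 even
      have hm2 : m % 2 = 1 := Nat.odd_iff.mp ho
      have hm12 : (m + 1) % 2 = 0 := by omega
      have hsign : (-1 : ℝ) ^ (m + 2) = -1 := by
        rcases ho with ⟨r, hr⟩
        subst hr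
        rw [show 2 * r + 1 + 2 = 2 * (r + 1) + 1 by ring, pow_succ, pow_mul]
        norm_num
      simp only [hm2, hm12, if_true] at ih' ⊢
      norm_num at ih' ⊢
      rw [hsign]
      have hc : c (m + 1) ≤ c m := by
        apply hm m (by omega) (by omega)
      linarith

lemma alt_sum_nonneg (n : ℕ) (c : ℕ → ℝ) (h0 : ∀ k, 1 ≤ k → k ≤ n → 0 ≤ c k)
    (hm : ∀ k, 1 ≤ k → k < n → c (k + 1) ≤ c k) :
    0 ≤ ∑ k ∈ Finset.Icc 1 n, (-1 : ℝ) ^ (k + 1) * c k := by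
  refine le_trans ?_ (alt_sum_ge n c h0 hm)
  by_cases h : n % 2 = 1
  · simp only [h, if_true]
    exact h0 n (by omega) le_rfl
  · simp [h]

/-- Theorem 2 for `0 < p < 1`: reversed Minkowski-type inequality with alternating
signs, with the sharp constant `2^(1/p - 1)`. -/
theorem alternating_minkowski_lt_one (n : ℕ) (hn : 1 ≤ n) (p : ℝ) (hp0 : 0 < p)
    (hp1 : p < 1) (a b : ℕ → ℝ)
    (ha_nonneg : ∀ k, 1 ≤ k → k ≤ n → 0 ≤ a k)
    (hb_nonneg : ∀ k, 1 ≤ k → k ≤ n → 0 ≤ b k)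
    (ha_mono : ∀ k, 1 ≤ k → k < n → a (k + 1) ≤ a k)
    (hb_mono : ∀ k, 1 ≤ k → k < n → b (k + 1) ≤ b k) :
    (∑ k ∈ Finset.Icc 1 n, (-1 : ℝ) ^ (k + 1) * (a k + b k) ^ p) ^ (1 / p) ≤
    (2 : ℝ) ^ (1 / p - 1) *
      ((∑ k ∈ Finset.Icc 1 n, (-1 : ℝ) ^ (k + 1) * a k ^ p) ^ (1 / p) +
        (∑ k ∈ Finset.Icc 1 n, (-1 : ℝ) ^ (k + 1) * b k ^ p) ^ (1 / p)) := by
  set S := ∑ k ∈ Finset.Icc 1 n, (-1 : ℝ) ^ (k + 1) * (a k + b k) ^ p with hS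
  set A := ∑ k ∈ Finset.Icc 1 n, (-1 : ℝ) ^ (k + 1) * a k ^ p with hA
  set B := ∑ k ∈ Finset.Icc 1 n, (-1 : ℝ) ^ (k + 1) * b k ^ p with hB
  have hp0' : (0:ℝ) ≤ p := hp0.le
  have hp1' : p ≤ 1 := hp1.le
  -- nonnegativity of S, A, B
  have hSnn : 0 ≤ S := by
    apply alt_sum_nonneg
    · intro k hk1 hk2
      exact Real.rpow_nonneg (by linarith [ha_nonneg k hk1 hk2, hb_nonneg k hk1 hk2]) p
    · intro k hk1 hk2
      apply Real.rpow_le_rpow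
        (by linarith [ha_nonneg (k+1) (by omega) (by omega), hb_nonneg (k+1) (by omega) (by omega)])
        (by linarith [ha_mono k hk1 hk2, hb_mono k hk1 hk2]) hp0'
  have hAnn : 0 ≤ A := by
    apply alt_sum_nonneg
    · intro k hk1 hk2
      exact Real.rpow_nonneg (ha_nonneg k hk1 hk2) p
    · intro k hk1 hk2
      exact Real.rpow_le_rpow (ha_nonneg (k+1) (by omega) (by omega)) (ha_mono k hk1 hk2) hp0'
  have hBnn : 0 ≤ B := by
    apply alt_sum_nonneg
    · intro k hk1 hk2
      exact Real.rpow_nonneg (hb_nonneg k hk1 hk2) p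
    · intro k hk1 hk2
      exact Real.rpow_le_rpow (hb_nonneg (k+1) (by omega) (by omega)) (hb_mono k hk1 hk2) hp0'
  -- Step 1: S ≤ A + B
  have hSAB : S ≤ A + B := by
    have key : 0 ≤ ∑ k ∈ Finset.Icc 1 n,
        (-1 : ℝ) ^ (k + 1) * (a k ^ p + b k ^ p - (a k + b k) ^ p) := by
      apply alt_sum_nonneg
      · intro k hk1 hk2
        have := c_mono hp0' hp1' (a := a k) (a' := 0) (b := b k) (b' := 0)
          le_rfl le_rfl (ha_nonneg k hk1 hk2) (hb_nonneg k hk1 hk2)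
        simpa [Real.zero_rpow hp0.ne'] using this
      · intro k hk1 hk2
        exact c_mono hp0' hp1' (ha_nonneg (k+1) (by omega) (by omega))
          (hb_nonneg (k+1) (by omega) (by omega)) (ha_mono k hk1 hk2) (hb_mono k hk1 hk2)
    have heq : ∑ k ∈ Finset.Icc 1 n,
        (-1 : ℝ) ^ (k + 1) * (a k ^ p + b k ^ p - (a k + b k) ^ p) = A + B - S := by
      rw [hA, hB, hS, ← Finset.sum_add_distrib, ← Finset.sum_sub_distrib]
      apply Finset.sum_congr rfl
      intro k _
      ring
    linarith [heq ▸ key]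
  -- Step 2: A + B ≤ 2^(1-p) * (A^(1/p) + B^(1/p))^p
  set x := A ^ (1/p) with hx
  set y := B ^ (1/p) with hy
  have hxnn : 0 ≤ x := Real.rpow_nonneg hAnn _
  have hynn : 0 ≤ y := Real.rpow_nonneg hBnn _
  have hxp : x ^ p = A := by
    rw [hx, ← Real.rpow_mul hAnn, one_div_mul_cancel hp0.ne', Real.rpow_one]
  have hyp : y ^ p = B := by
    rw [hy, ← Real.rpow_mul hBnn, one_div_mul_cancel hp0.ne', Real.rpow_one]
  have h2p : (0:ℝ) < (2:ℝ) ^ p := Real.rpow_pos_of_pos two_pos p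
  have hstep2 : x ^ p + y ^ p ≤ (2:ℝ) ^ (1 - p) * (x + y) ^ p := by
    have hcc := (Real.concaveOn_rpow hp0' hp1').2 (Set.mem_Ici.mpr hxnn)
      (Set.mem_Ici.mpr hynn) (by norm_num : (0:ℝ) ≤ 1/2) (by norm_num : (0:ℝ) ≤ 1/2)
      (by norm_num)
    simp only [smul_eq_mul] at hcc
    have hmid : (1/2 : ℝ) * x + (1/2 : ℝ) * y = (x + y) / 2 := by ring
    rw [hmid, Real.div_rpow (by linarith) (by norm_num)] at hcc
    have h2sub : (2:ℝ) ^ (1 - p) = 2 / (2:ℝ) ^ p := by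
      rw [Real.rpow_sub two_pos, Real.rpow_one]
    have hcc2 : (1/2 * x ^ p + 1/2 * y ^ p) * (2:ℝ) ^ p ≤ (x + y) ^ p :=
      (le_div_iff₀ h2p).mp hcc
    rw [h2sub, div_mul_eq_mul_div, le_div_iff₀ h2p]
    nlinarith [hcc2]
  have hchain : S ≤ (2:ℝ) ^ (1 - p) * (x + y) ^ p := by
    rw [hxp, hyp] at hstep2; linarith
  have h1p : (0:ℝ) ≤ 1/p := by positivity
  calc S ^ (1/p) ≤ ((2:ℝ) ^ (1 - p) * (x + y) ^ p) ^ (1/p) :=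
        Real.rpow_le_rpow hSnn hchain h1p
    _ = ((2:ℝ) ^ (1 - p)) ^ (1/p) * ((x + y) ^ p) ^ (1/p) := by
        rw [Real.mul_rpow (Real.rpow_nonneg (by norm_num) _) (Real.rpow_nonneg (by linarith) _)]
    _ = (2:ℝ) ^ (1/p - 1) * (x + y) := by
        rw [← Real.rpow_mul (by norm_num : (0:ℝ) ≤ 2),
          ← Real.rpow_mul (by linarith : (0:ℝ) ≤ x + y),
          mul_one_div_cancel hp0.ne', Real.rpow_one]
        congr 1
        field_simp
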